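/- For all Ω > 0, I_p > 0, Θ > 0, σ_ε² ≥ 0 and B > 0 with B·I_p·Ω ≠ 1: ∫_{Θ}^{∞} ( ∫_{σ_ε²}^{∞} ln(1 + (I_p/y) x) e^{−x/Ω} dx ) B e^{−B y} dy = Ω · 𝕁₂(Ω), where 𝕁₂(Ω) = −e^{−σ_ε²/Ω} E₁(BΘ) − (1/(1 − I_pΩB)) { −e^{I_pσ_ε²B − σ_ε²/Ω} E₁(B(Θ + I_pσ_ε²)) + e^{Θ/(I_pΩ) − BΘ} E₁((Θ + I_pσ_ε²)/(I_pΩ)) } + e^{−BΘ − σ_ε²/Ω} { ln(1 + I_pσ_ε²/Θ) + e^{(Θ + I_pσ_ε²)/(I_pΩ)} E₁((Θ + I_pσ_ε²)/(I_pΩ)) }, and E₁(z) = ∫_z^{∞} (e^{−t}/t) dt for z > 0. -/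

import Mathlib

open Real MeasureTheory Set Filter Topology

noncomputable def E1 (z : ℝ) : ℝ := ∫ t in Set.Ioi z, Real.exp (-t) / t

lemma integrableOn_exp_neg (a : ℝ) : IntegrableOn (fun t : ℝ => Real.exp (-t)) (Ioi a) := by
  simpa using exp_neg_integrableOn_Ioi a one_pos

lemma contOn_g {s : Set ℝ} (hs : ∀ t ∈ s, t ≠ 0) :
    ContinuousOn (fun t : ℝ => Real.exp (-t) / t) s :=
  ((Real.continuous_exp.comp continuous_neg).continuousOn).div continuousOn_id hs

lemma E1_integrableOn {z : ℝ} (hz : 0 < z) :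
    IntegrableOn (fun t : ℝ => Real.exp (-t) / t) (Ioi z) := by
  apply Integrable.mono' (((integrableOn_exp_neg z).const_mul (1 / z)))
    ((contOn_g (fun t ht => ne_of_gt (hz.trans ht))).aestronglyMeasurable measurableSet_Ioi)
  filter_upwards [ae_restrict_mem measurableSet_Ioi] with t ht
  have ht0 : 0 < t := hz.trans ht
  have h1 : Real.exp (-t) / t ≤ Real.exp (-t) / z := by
    gcongr; exact le_of_lt ht
  have : ‖Real.exp (-t) / t‖ = Real.exp (-t) / t := abs_of_nonneg (by positivity)
  rw [this]
  calc Real.exp (-t) / t ≤ Real.exp (-t) / z := h1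
    _ = 1 / z * Real.exp (-t) := by ring

lemma E1_nonneg {z : ℝ} (hz : 0 < z) : 0 ≤ E1 z :=
  setIntegral_nonneg measurableSet_Ioi fun t ht => by
    have : 0 < t := hz.trans ht; positivity

lemma E1_le {z : ℝ} (hz : 0 < z) : E1 z ≤ Real.exp (-z) / z := by
  have : E1 z ≤ ∫ t in Ioi z, Real.exp (-t) / z := by
    apply setIntegral_mono_on (E1_integrableOn hz)
      ((integrableOn_exp_neg z).div_const z) measurableSet_Ioi
    intro t ht
    have h2 : z ≤ t := le_of_lt ht
    gcongr
  calc E1 z ≤ ∫ t in Ioi z, Real.exp (-t) / z := this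
    _ = (∫ t in Ioi z, Real.exp (-t)) / z := by rw [integral_div]
    _ = Real.exp (-z) / z := by rw [integral_exp_neg_Ioi]

lemma E1_diff {c z : ℝ} (hc : 0 < c) (hcz : c ≤ z) :
    E1 c - E1 z = ∫ t in c..z, Real.exp (-t) / t := by
  have hz : 0 < z := hc.trans_le hcz
  rw [intervalIntegral.integral_of_le hcz]
  have hu : Ioc c z ∪ Ioi z = Ioi c := Ioc_union_Ioi_eq_Ioi hcz
  have h := setIntegral_union (Ioc_disjoint_Ioi le_rfl) measurableSet_Ioi
    ((E1_integrableOn hc).mono_set (hu ▸ subset_union_left))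
    (E1_integrableOn hz) (f := fun t : ℝ => Real.exp (-t) / t) (μ := volume)
  rw [hu] at h
  have : E1 c = (∫ t in Ioc c z, Real.exp (-t) / t) + E1 z := h
  rw [this]; ring

lemma E1_eq_sub {c z : ℝ} (hc : 0 < c) (hz : 0 < z) :
    E1 z = E1 c - ∫ t in c..z, Real.exp (-t) / t := by
  rcases le_total c z with h | h
  · rw [← E1_diff hc h]; ring
  · rw [intervalIntegral.integral_symm, ← E1_diff hz h]; ring

lemma E1_hasDerivAt {z : ℝ} (hz : 0 < z) :
    HasDerivAt E1 (-(Real.exp (-z) / z)) z := by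
  have hmain : HasDerivAt (fun w => E1 z - ∫ t in z..w, Real.exp (-t) / t)
      (-(Real.exp (-z) / z)) z := by
    have hftc : HasDerivAt (fun w => ∫ t in z..w, Real.exp (-t) / t)
        (Real.exp (-z) / z) z := by
      apply intervalIntegral.integral_hasDerivAt_right
        (by simp [intervalIntegrable_iff])
      · exact (contOn_g (s := Ioi 0) (fun t ht => ne_of_gt ht)).stronglyMeasurableAtFilter
          isOpen_Ioi z hz
      · exact (contOn_g (s := Ioi 0) (fun t ht => ne_of_gt ht)).continuousAt
          (Ioi_mem_nhds hz)
    have h := (hasDerivAt_const z (E1 z)).sub hftc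
    rw [zero_sub] at h
    exact h
  apply hmain.congr_of_eventuallyEq
  filter_upwards [Ioi_mem_nhds hz] with w hw
  exact E1_eq_sub hz hw

lemma E1_continuousAt {z : ℝ} (hz : 0 < z) : ContinuousAt E1 z :=
  (E1_hasDerivAt hz).continuousAt

lemma tendsto_exp_neg_mul (B : ℝ) (hB : 0 < B) :
    Tendsto (fun y : ℝ => Real.exp (-(B * y))) atTop (𝓝 0) := by
  have h1 : Tendsto (fun y : ℝ => B * y) atTop atTop :=
    tendsto_id.const_mul_atTop hB
  have h2 : Tendsto (fun y : ℝ => -(B * y)) atTop atBot := tendsto_neg_atTop_atBot.comp h1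
  exact Real.tendsto_exp_atBot.comp h2

/-- key integrable bound: `x * exp(-x/Ω) ≤ 2Ω exp(-x/(2Ω))` style -/
lemma log_mul_exp_integrable {Ω c a : ℝ} (hΩ : 0 < Ω) (hc : 0 ≤ c) (ha : 0 ≤ a) :
    IntegrableOn (fun x : ℝ => Real.log (1 + c * x) * Real.exp (-x / Ω)) (Ioi a) := by
  apply Integrable.mono' ((exp_neg_integrableOn_Ioi a
      (b := 1 / (2 * Ω)) (by positivity)).const_mul (c * (2 * Ω)))
  · apply ContinuousOn.aestronglyMeasurable _ measurableSet_Ioi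
    apply ContinuousOn.mul _ (Real.continuous_exp.comp (continuous_id.neg.div_const Ω)).continuousOn
    apply (Real.continuousOn_log.comp (continuous_const.add
      (continuous_const.mul continuous_id)).continuousOn)
    intro x hx
    have hx0 : 0 ≤ x := le_trans ha (le_of_lt hx)
    simp only [Function.comp, id_eq, Set.mem_compl_iff, Set.mem_singleton_iff]
    intro h; simp only [Pi.add_apply, Pi.mul_apply, id_eq] at h; nlinarith
  · filter_upwards [ae_restrict_mem measurableSet_Ioi] with x hx
    have hx0 : 0 ≤ x := le_trans ha (le_of_lt hx)
    have h1 : 0 ≤ Real.log (1 + c * x) := Real.log_nonneg (by nlinarith)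
    have h2 : Real.log (1 + c * x) ≤ c * x := by
      have := Real.log_le_sub_one_of_pos (show (0:ℝ) < 1 + c * x by nlinarith)
      linarith
    have h3 : x ≤ 2 * Ω * Real.exp (x / (2 * Ω)) := by
      have := Real.add_one_le_exp (x / (2 * Ω))
      have h4 : x / (2 * Ω) ≤ Real.exp (x / (2 * Ω)) := by
        have h5 : (0:ℝ) ≤ x / (2*Ω) := by positivity
        linarith
      calc x = 2 * Ω * (x / (2 * Ω)) := by field_simp
        _ ≤ 2 * Ω * Real.exp (x / (2 * Ω)) := by gcongr
    have hrw : ‖Real.log (1 + c * x) * Real.exp (-x / Ω)‖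
        = Real.log (1 + c * x) * Real.exp (-x / Ω) := abs_of_nonneg (by positivity)
    rw [hrw]
    calc Real.log (1 + c * x) * Real.exp (-x / Ω)
        ≤ (c * (2 * Ω * Real.exp (x / (2 * Ω)))) * Real.exp (-x / Ω) := by
          apply mul_le_mul_of_nonneg_right _ (le_of_lt (Real.exp_pos _))
          exact h2.trans (by nlinarith [Real.exp_pos (x / (2*Ω))])
      _ = c * (2 * Ω) * (Real.exp (x / (2 * Ω)) * Real.exp (-x / Ω)) := by ring
      _ = c * (2 * Ω) * Real.exp (-(1 / (2 * Ω)) * x) := by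
          rw [← Real.exp_add]; congr 1; field_simp; ring

lemma inner_eq {Ω Ip σe y : ℝ} (hΩ : 0 < Ω) (hIp : 0 < Ip) (hσ : 0 ≤ σe) (hy : 0 < y) :
    (∫ x in Set.Ioi σe, Real.log (1 + Ip / y * x) * Real.exp (-x / Ω))
      = Ω * Real.exp (-σe / Ω) * Real.log (1 + Ip * σe / y)
        + Ω * Real.exp (y / (Ip * Ω)) * E1 ((y + Ip * σe) / (Ip * Ω)) := by
  set H : ℝ → ℝ := fun x => -(Ω * Real.exp (-x / Ω) * Real.log (1 + Ip / y * x))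
      - Ω * Real.exp (y / (Ip * Ω)) * E1 ((y + Ip * x) / (Ip * Ω)) with hH
  have harg : ∀ x : ℝ, 0 ≤ x → 0 < (y + Ip * x) / (Ip * Ω) := by
    intro x hx; positivity
  have hderiv : ∀ x ∈ Ioi σe, HasDerivAt H
      (Real.log (1 + Ip / y * x) * Real.exp (-x / Ω)) x := by
    intro x hx
    have hx0 : 0 ≤ x := le_trans hσ (le_of_lt hx)
    have hlx : (0:ℝ) < 1 + Ip / y * x := by positivity
    have h1 : HasDerivAt (fun x : ℝ => Real.exp (-x / Ω))
        (Real.exp (-x / Ω) * (-1 / Ω)) x := by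
      simpa using (((hasDerivAt_id x).neg.div_const Ω).exp)
    have h2 : HasDerivAt (fun x : ℝ => Real.log (1 + Ip / y * x))
        ((Ip / y) / (1 + Ip / y * x)) x := by
      have := ((hasDerivAt_id x).const_mul (Ip / y)).const_add 1
      simpa using this.log (ne_of_gt hlx)
    have h3 : HasDerivAt (fun x : ℝ => E1 ((y + Ip * x) / (Ip * Ω)))
        (-(Real.exp (-((y + Ip * x) / (Ip * Ω))) / ((y + Ip * x) / (Ip * Ω)))
          * (Ip / (Ip * Ω))) x := by
      have hin : HasDerivAt (fun x : ℝ => (y + Ip * x) / (Ip * Ω)) (Ip / (Ip * Ω)) x := by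
        simpa using (((hasDerivAt_id x).const_mul Ip).const_add y).div_const (Ip * Ω)
      exact (E1_hasDerivAt (harg x hx0)).comp x hin
    have hsum := (((h1.const_mul Ω).mul h2).neg).sub (h3.const_mul (Ω * Real.exp (y / (Ip * Ω))))
    have hexp : Real.exp (y / (Ip * Ω)) * Real.exp (-((y + Ip * x) / (Ip * Ω)))
        = Real.exp (-x / Ω) := by
      rw [← Real.exp_add]; congr 1; field_simp; ring
    have hyx : (0:ℝ) < y + Ip * x := by positivity
    have hne1 : (1 : ℝ) + Ip / y * x ≠ 0 := ne_of_gt hlx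
    have hne2 : y + Ip * x ≠ 0 := ne_of_gt hyx
    refine hsum.congr_deriv ?_
    rw [← hexp]
    field_simp
    ring
  have hcont : ContinuousWithinAt H (Ici σe) σe := by
    apply ContinuousAt.continuousWithinAt
    have c1 : ContinuousAt (fun x : ℝ => Real.exp (-x / Ω)) σe :=
      (Real.continuous_exp.comp (continuous_id.neg.div_const Ω)).continuousAt
    have c2 : ContinuousAt (fun x : ℝ => Real.log (1 + Ip / y * x)) σe := by
      have hpos : (0:ℝ) < 1 + Ip / y * σe := by positivity
      exact ContinuousAt.comp (g := Real.log) (f := fun x : ℝ => 1 + Ip / y * x)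
        (Real.continuousAt_log (ne_of_gt hpos)) (by fun_prop)
    have c3 : ContinuousAt (fun x : ℝ => E1 ((y + Ip * x) / (Ip * Ω))) σe :=
      ContinuousAt.comp (g := E1) (f := fun x : ℝ => (y + Ip * x) / (Ip * Ω))
        (E1_continuousAt (harg σe hσ)) (by fun_prop)
    exact (((continuousAt_const.mul c1).mul c2).neg).sub (continuousAt_const.mul c3)
  have htend : Tendsto H atTop (𝓝 0) := by
    apply squeeze_zero_norm' (a := fun x => (2 * Ω ^ 2 * (Ip / y) + Ω * (Ip * Ω) / y)
        * Real.exp (-(1 / (2 * Ω)) * x))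
    · filter_upwards [eventually_ge_atTop 0] with x hx
      have hlx : (0:ℝ) < 1 + Ip / y * x := by positivity
      have hu : 0 < (y + Ip * x) / (Ip * Ω) := harg x hx
      have hE1 := E1_le hu
      have hE1n := E1_nonneg hu
      have hlog1 : 0 ≤ Real.log (1 + Ip / y * x) := Real.log_nonneg (le_add_of_nonneg_right (by positivity))
      have hlog2 : Real.log (1 + Ip / y * x) ≤ Ip / y * x := by
        have := Real.log_le_sub_one_of_pos hlx; linarith
      have hexp : Real.exp (y / (Ip * Ω)) * Real.exp (-((y + Ip * x) / (Ip * Ω)))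
          = Real.exp (-x / Ω) := by
        rw [← Real.exp_add]; congr 1; field_simp; ring
      have hxle : x ≤ 2 * Ω * Real.exp (x / (2 * Ω)) := by
        have h4 := Real.add_one_le_exp (x / (2 * Ω))
        have h5 : (0:ℝ) ≤ x / (2 * Ω) := by positivity
        calc x = 2 * Ω * (x / (2 * Ω)) := by field_simp
          _ ≤ 2 * Ω * Real.exp (x / (2 * Ω)) := by
              have : x / (2*Ω) ≤ Real.exp (x / (2*Ω)) := by linarith
              gcongr
      have hexp2 : Real.exp (x / (2 * Ω)) * Real.exp (-x / Ω)
          = Real.exp (-(1 / (2 * Ω)) * x) := by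
        rw [← Real.exp_add]; congr 1; field_simp; ring
      have hexp3 : Real.exp (-x / Ω) ≤ Real.exp (-(1 / (2 * Ω)) * x) := by
        apply Real.exp_le_exp.2
        have h11 : (1:ℝ) / (2 * Ω) ≤ 1 / Ω := by
          apply one_div_le_one_div_of_le hΩ; linarith
        calc -x / Ω = -((1 / Ω) * x) := by ring
          _ ≤ -((1 / (2 * Ω)) * x) := by nlinarith
          _ = -(1 / (2 * Ω)) * x := by ring
      have hA : Ω * Real.exp (-x / Ω) * Real.log (1 + Ip / y * x)
          ≤ 2 * Ω ^ 2 * (Ip / y) * Real.exp (-(1 / (2 * Ω)) * x) := by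
        calc Ω * Real.exp (-x / Ω) * Real.log (1 + Ip / y * x)
            ≤ Ω * Real.exp (-x / Ω) * (Ip / y * (2 * Ω * Real.exp (x / (2 * Ω)))) := by
              have h6 : Real.log (1 + Ip / y * x) ≤ Ip / y * (2 * Ω * Real.exp (x / (2*Ω))) :=
                hlog2.trans (by gcongr)
              have h7 : 0 ≤ Ω * Real.exp (-x / Ω) := by positivity
              nlinarith [Real.exp_pos (-x/Ω)]
          _ = 2 * Ω ^ 2 * (Ip / y) * (Real.exp (x / (2 * Ω)) * Real.exp (-x / Ω)) := by ring
          _ = 2 * Ω ^ 2 * (Ip / y) * Real.exp (-(1 / (2 * Ω)) * x) := by rw [hexp2]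
      have hB : Ω * Real.exp (y / (Ip * Ω)) * E1 ((y + Ip * x) / (Ip * Ω))
          ≤ Ω * (Ip * Ω) / y * Real.exp (-(1 / (2 * Ω)) * x) := by
        have h8 : E1 ((y + Ip * x) / (Ip * Ω))
            ≤ Real.exp (-((y + Ip * x) / (Ip * Ω))) * (Ip * Ω) / (y + Ip * x) := by
          have := E1_le hu
          calc E1 ((y + Ip * x) / (Ip * Ω))
              ≤ Real.exp (-((y + Ip * x) / (Ip * Ω))) / ((y + Ip * x) / (Ip * Ω)) := this
            _ = Real.exp (-((y + Ip * x) / (Ip * Ω))) * (Ip * Ω) / (y + Ip * x) := by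
                rw [div_div_eq_mul_div]
        calc Ω * Real.exp (y / (Ip * Ω)) * E1 ((y + Ip * x) / (Ip * Ω))
            ≤ Ω * Real.exp (y / (Ip * Ω))
              * (Real.exp (-((y + Ip * x) / (Ip * Ω))) * (Ip * Ω) / (y + Ip * x)) := by
              have : 0 ≤ Ω * Real.exp (y / (Ip * Ω)) := by positivity
              nlinarith
          _ = Ω * (Ip * Ω) / (y + Ip * x)
              * (Real.exp (y / (Ip * Ω)) * Real.exp (-((y + Ip * x) / (Ip * Ω)))) := by ring
          _ = Ω * (Ip * Ω) / (y + Ip * x) * Real.exp (-x / Ω) := by rw [hexp]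
          _ ≤ Ω * (Ip * Ω) / y * Real.exp (-(1 / (2 * Ω)) * x) := by
              have h9 : Ω * (Ip * Ω) / (y + Ip * x) ≤ Ω * (Ip * Ω) / y :=
                div_le_div_of_nonneg_left (by positivity) hy (by nlinarith)
              have h10 : (0:ℝ) ≤ Ω * (Ip * Ω) / (y + Ip * x) := by positivity
              nlinarith [Real.exp_pos (-x/Ω), Real.exp_pos (-(1 / (2 * Ω)) * x)]
      have hAnn : 0 ≤ Ω * Real.exp (-x / Ω) * Real.log (1 + Ip / y * x) := by positivity
      have hBnn : 0 ≤ Ω * Real.exp (y / (Ip * Ω)) * E1 ((y + Ip * x) / (Ip * Ω)) := by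
        positivity
      have : ‖H x‖ ≤ Ω * Real.exp (-x / Ω) * Real.log (1 + Ip / y * x)
          + Ω * Real.exp (y / (Ip * Ω)) * E1 ((y + Ip * x) / (Ip * Ω)) := by
        rw [hH]
        calc ‖-(Ω * Real.exp (-x / Ω) * Real.log (1 + Ip / y * x))
              - Ω * Real.exp (y / (Ip * Ω)) * E1 ((y + Ip * x) / (Ip * Ω))‖
            ≤ ‖-(Ω * Real.exp (-x / Ω) * Real.log (1 + Ip / y * x))‖
              + ‖Ω * Real.exp (y / (Ip * Ω)) * E1 ((y + Ip * x) / (Ip * Ω))‖ :=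
              norm_sub_le _ _
          _ = Ω * Real.exp (-x / Ω) * Real.log (1 + Ip / y * x)
              + Ω * Real.exp (y / (Ip * Ω)) * E1 ((y + Ip * x) / (Ip * Ω)) := by
              rw [norm_neg, Real.norm_of_nonneg hAnn, Real.norm_of_nonneg hBnn]
      refine this.trans ?_
      have hsumeq : (2 * Ω ^ 2 * (Ip / y)) * Real.exp (-(1 / (2 * Ω)) * x)
          + (Ω * (Ip * Ω) / y) * Real.exp (-(1 / (2 * Ω)) * x)
          = (2 * Ω ^ 2 * (Ip / y) + Ω * (Ip * Ω) / y)
            * Real.exp (-(1 / (2 * Ω)) * x) := by ring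
      linarith [hA, hB]
    · simpa using (tendsto_exp_neg_mul (1 / (2 * Ω)) (by positivity)).const_mul
        (2 * Ω ^ 2 * (Ip / y) + Ω * (Ip * Ω) / y)
  have hint : IntegrableOn (fun x => Real.log (1 + Ip / y * x) * Real.exp (-x / Ω))
      (Ioi σe) := log_mul_exp_integrable hΩ (by positivity) hσ
  have hftc := integral_Ioi_of_hasDerivAt_of_tendsto hcont hderiv hint htend
  rw [hftc]
  have hHσ : H σe = -(Ω * Real.exp (-σe / Ω) * Real.log (1 + Ip * σe / y))
      - Ω * Real.exp (y / (Ip * Ω)) * E1 ((y + Ip * σe) / (Ip * Ω)) := by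
    simp only [hH]
    rw [show (1 : ℝ) + Ip / y * σe = 1 + Ip * σe / y by ring]
  rw [hHσ]
  ring

noncomputable def J2 (σe Ip Θ B Ω : ℝ) : ℝ :=
  -Real.exp (-σe / Ω) * E1 (B * Θ)
    - 1 / (1 - Ip * Ω * B) *
        (-Real.exp (Ip * σe * B - σe / Ω) * E1 (B * (Θ + Ip * σe))
          + Real.exp (Θ / (Ip * Ω) - B * Θ) * E1 ((Θ + Ip * σe) / (Ip * Ω)))
    + Real.exp (-B * Θ - σe / Ω) *
        (Real.log (1 + Ip * σe / Θ)
          + Real.exp ((Θ + Ip * σe) / (Ip * Ω)) * E1 ((Θ + Ip * σe) / (Ip * Ω)))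

set_option maxHeartbeats 2000000 in
/-- the double integral of the interference-limited part equals `Ω·𝕁₂(Ω)`. -/
theorem double_integral_eq_J2 (Ω Ip Θ σe B : ℝ) (hΩ : 0 < Ω) (hIp : 0 < Ip)
    (hΘ : 0 < Θ) (hσ : 0 ≤ σe) (hB : 0 < B) (hne : B * Ip * Ω ≠ 1) :
    ∫ y in Set.Ioi Θ,
        (∫ x in Set.Ioi σe, Real.log (1 + Ip / y * x) * Real.exp (-x / Ω))
          * (B * Real.exp (-B * y))
      = Ω * J2 σe Ip Θ B Ω := by
  have hne' : 1 - Ip * Ω * B ≠ 0 := by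
    intro h; apply hne; nlinarith
  set G : ℝ → ℝ := fun y =>
    Ω * Real.exp (-(σe / Ω)) * E1 (B * y)
    + Ω / (1 - Ip * Ω * B) * (-Real.exp (Ip * σe * B - σe / Ω) * E1 (B * (y + Ip * σe))
        + Real.exp (y / (Ip * Ω) - B * y) * E1 ((y + Ip * σe) / (Ip * Ω)))
    - Ω * (Real.exp (-(B * y) - σe / Ω) * (Real.log (1 + Ip * σe / y)
        + Real.exp ((y + Ip * σe) / (Ip * Ω)) * E1 ((y + Ip * σe) / (Ip * Ω)))) with hG
  have hderivall : ∀ y : ℝ, 0 < y → HasDerivAt G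
      ((Ω * Real.exp (-σe / Ω) * Real.log (1 + Ip * σe / y)
        + Ω * Real.exp (y / (Ip * Ω)) * E1 ((y + Ip * σe) / (Ip * Ω)))
        * (B * Real.exp (-B * y))) y := by
    intro y hy
    have hby : 0 < B * y := by positivity
    have hbys : 0 < B * (y + Ip * σe) := by positivity
    have hu : 0 < (y + Ip * σe) / (Ip * Ω) := by positivity
    have hys : (0:ℝ) < y + Ip * σe := by positivity
    have hlx : (0:ℝ) < 1 + Ip * σe / y := by positivity
    have d1 : HasDerivAt (fun y => E1 (B * y)) (-(Real.exp (-(B * y)) / (B * y)) * B) y :=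
      (E1_hasDerivAt hby).comp y (by simpa using (hasDerivAt_id y).const_mul B)
    have d2 : HasDerivAt (fun y => E1 (B * (y + Ip * σe)))
        (-(Real.exp (-(B * (y + Ip * σe))) / (B * (y + Ip * σe))) * B) y := by
      have hin : HasDerivAt (fun y : ℝ => B * (y + Ip * σe)) B y := by
        simpa using ((hasDerivAt_id y).add_const (Ip * σe)).const_mul B
      exact (E1_hasDerivAt hbys).comp y hin
    have d3 : HasDerivAt (fun y : ℝ => Real.exp (y / (Ip * Ω) - B * y))
        (Real.exp (y / (Ip * Ω) - B * y) * (1 / (Ip * Ω) - B)) y := by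
      have hin : HasDerivAt (fun y : ℝ => y / (Ip * Ω) - B * y) (1 / (Ip * Ω) - B) y := by
        have := ((hasDerivAt_id y).div_const (Ip * Ω)).sub ((hasDerivAt_id y).const_mul B)
        simp at this ⊢
        exact this
      simpa using hin.exp
    have d4 : HasDerivAt (fun y : ℝ => E1 ((y + Ip * σe) / (Ip * Ω)))
        (-(Real.exp (-((y + Ip * σe) / (Ip * Ω))) / ((y + Ip * σe) / (Ip * Ω)))
          * (1 / (Ip * Ω))) y := by
      have hin : HasDerivAt (fun y : ℝ => (y + Ip * σe) / (Ip * Ω)) (1 / (Ip * Ω)) y := by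
        simpa using ((hasDerivAt_id y).add_const (Ip * σe)).div_const (Ip * Ω)
      exact (E1_hasDerivAt hu).comp y hin
    have d5 : HasDerivAt (fun y : ℝ => Real.exp (-(B * y) - σe / Ω))
        (Real.exp (-(B * y) - σe / Ω) * (-B)) y := by
      have hin : HasDerivAt (fun y : ℝ => -(B * y) - σe / Ω) (-B) y := by
        have := (((hasDerivAt_id y).const_mul B).neg).sub_const (σe / Ω)
        simpa using this
      simpa using hin.exp
    have d6 : HasDerivAt (fun y : ℝ => Real.log (1 + Ip * σe / y))
        ((Ip * σe * -(y ^ 2)⁻¹) / (1 + Ip * σe / y)) y := by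
      have hin : HasDerivAt (fun y : ℝ => 1 + Ip * σe / y) (Ip * σe * -(y ^ 2)⁻¹) y := by
        have := ((hasDerivAt_inv (ne_of_gt hy)).const_mul (Ip * σe)).const_add 1
        simpa [div_eq_mul_inv] using this
      exact hin.log (ne_of_gt hlx)
    have d7 : HasDerivAt (fun y : ℝ => Real.exp ((y + Ip * σe) / (Ip * Ω)))
        (Real.exp ((y + Ip * σe) / (Ip * Ω)) * (1 / (Ip * Ω))) y := by
      have hin : HasDerivAt (fun y : ℝ => (y + Ip * σe) / (Ip * Ω)) (1 / (Ip * Ω)) y := by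
        simpa using ((hasDerivAt_id y).add_const (Ip * σe)).div_const (Ip * Ω)
      simpa using hin.exp
    have hsum := ((d1.const_mul (Ω * Real.exp (-(σe / Ω)))).add
        (((d2.const_mul (-Real.exp (Ip * σe * B - σe / Ω))).add
          (d3.mul d4)).const_mul (Ω / (1 - Ip * Ω * B)))).sub
        ((d5.mul (d6.add (d7.mul d4))).const_mul Ω)
    refine hsum.congr_deriv ?_
    simp only [Pi.add_apply, Pi.mul_apply]
    have hyne : y ≠ 0 := ne_of_gt hy
    have hysne : y + Ip * σe ≠ 0 := ne_of_gt hys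
    have hlxne : (1:ℝ) + Ip * σe / y ≠ 0 := ne_of_gt hlx
    have e6 : (y + Ip * σe) / (Ip * Ω) = y / (Ip * Ω) + σe / Ω := by
      field_simp
    have e1 : Real.exp (Ip * σe * B - σe / Ω)
        = Real.exp (Ip * σe * B) * (Real.exp (σe / Ω))⁻¹ := by
      rw [Real.exp_sub, div_eq_mul_inv]
    have e2 : Real.exp (y / (Ip * Ω) - B * y)
        = Real.exp (y / (Ip * Ω)) * (Real.exp (B * y))⁻¹ := by
      rw [Real.exp_sub, div_eq_mul_inv]
    have e3 : Real.exp (-(B * y)) = (Real.exp (B * y))⁻¹ := Real.exp_neg _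
    have e4 : Real.exp (-(B * (y + Ip * σe)))
        = (Real.exp (B * y))⁻¹ * (Real.exp (Ip * σe * B))⁻¹ := by
      rw [show -(B * (y + Ip * σe)) = -(B * y) + -(Ip * σe * B) by ring, Real.exp_add,
        Real.exp_neg, Real.exp_neg]
    have e5 : Real.exp (-(B * y) - σe / Ω)
        = (Real.exp (B * y))⁻¹ * (Real.exp (σe / Ω))⁻¹ := by
      rw [Real.exp_sub, Real.exp_neg, div_eq_mul_inv]
    have e7 : Real.exp (-(y / (Ip * Ω) + σe / Ω))
        = (Real.exp (y / (Ip * Ω)))⁻¹ * (Real.exp (σe / Ω))⁻¹ := by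
      rw [Real.exp_neg, Real.exp_add, mul_inv]
    have e8 : Real.exp (y / (Ip * Ω) + σe / Ω)
        = Real.exp (y / (Ip * Ω)) * Real.exp (σe / Ω) := Real.exp_add _ _
    have e9 : Real.exp (-σe / Ω) = (Real.exp (σe / Ω))⁻¹ := by
      rw [neg_div, Real.exp_neg]
    have e10 : Real.exp (-(σe / Ω)) = (Real.exp (σe / Ω))⁻¹ := Real.exp_neg _
    have e11 : Real.exp (-B * y) = (Real.exp (B * y))⁻¹ := by
      rw [neg_mul, Real.exp_neg]
    rw [e6, e1, e2, e3, e4, e5, e7, e8, e9, e10, e11]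
    have hEBy := Real.exp_ne_zero (B * y)
    have hEs := Real.exp_ne_zero (σe / Ω)
    have hEZ := Real.exp_ne_zero (y / (Ip * Ω))
    have hEW := Real.exp_ne_zero (Ip * σe * B)
    have hune : y / (Ip * Ω) + σe / Ω ≠ 0 := by rw [← e6]; exact ne_of_gt hu
    set Xv := Real.exp (B * y) with hXv
    set Yv := Real.exp (σe / Ω) with hYv
    set Zv := Real.exp (y / (Ip * Ω)) with hZv
    set Wv := Real.exp (Ip * σe * B) with hWv
    set L1 := E1 (B * y) with hL1
    set L2 := E1 (B * (y + Ip * σe)) with hL2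
    set L3 := E1 (y / (Ip * Ω) + σe / Ω) with hL3
    set L := Real.log (1 + Ip * σe / y) with hL
    have hne'' : 1 - Ω * Ip * B ≠ 0 := by
      rw [show Ω * Ip * B = Ip * Ω * B by ring]; exact hne'
    field_simp
    have hk : (1 - Ω * Ip * B)⁻¹ * (1 - Ω * Ip * B) = 1 := inv_mul_cancel₀ hne''
    linear_combination (Yv * Zv * L3 * y * (y + Ip * σe)) * hk
  -- rewrite inner integral in closed form
  have hcongr : ∫ y in Set.Ioi Θ,
      (∫ x in Set.Ioi σe, Real.log (1 + Ip / y * x) * Real.exp (-x / Ω))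
        * (B * Real.exp (-B * y))
      = ∫ y in Set.Ioi Θ,
      (Ω * Real.exp (-σe / Ω) * Real.log (1 + Ip * σe / y)
        + Ω * Real.exp (y / (Ip * Ω)) * E1 ((y + Ip * σe) / (Ip * Ω)))
        * (B * Real.exp (-B * y)) := by
    apply setIntegral_congr_fun measurableSet_Ioi
    intro y hy
    dsimp only
    rw [inner_eq hΩ hIp hσ (hΘ.trans hy)]
  rw [hcongr]
  -- integrability of the closed-form integrand
  have hbnd : ∀ y : ℝ, Θ < y →
      ‖(Ω * Real.exp (-σe / Ω) * Real.log (1 + Ip * σe / y)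
        + Ω * Real.exp (y / (Ip * Ω)) * E1 ((y + Ip * σe) / (Ip * Ω)))
        * (B * Real.exp (-B * y))‖
      ≤ (Ω * (Ip * σe / Θ) + Ω * (Ip * Ω) / Θ) * B * Real.exp (-B * y) := by
    intro y hy
    have hy0 : 0 < y := hΘ.trans hy
    have hys : (0:ℝ) < y + Ip * σe := by positivity
    have hu : 0 < (y + Ip * σe) / (Ip * Ω) := by positivity
    have hlx : (0:ℝ) < 1 + Ip * σe / y := by positivity
    have hE1n := E1_nonneg hu
    have hlog1 : 0 ≤ Real.log (1 + Ip * σe / y) :=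
      Real.log_nonneg (le_add_of_nonneg_right (by positivity))
    have hlog2 : Real.log (1 + Ip * σe / y) ≤ Ip * σe / Θ := by
      have h1 := Real.log_le_sub_one_of_pos hlx
      have h2 : Ip * σe / y ≤ Ip * σe / Θ :=
        div_le_div_of_nonneg_left (by positivity) hΘ (le_of_lt hy) |>.trans_eq rfl
      linarith
    have hexp : Real.exp (y / (Ip * Ω)) * Real.exp (-((y + Ip * σe) / (Ip * Ω)))
        = Real.exp (-(σe / Ω)) := by
      rw [← Real.exp_add]; congr 1; field_simp; ring
    have hE1b : Ω * Real.exp (y / (Ip * Ω)) * E1 ((y + Ip * σe) / (Ip * Ω))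
        ≤ Ω * (Ip * Ω) / Θ := by
      have h8 : E1 ((y + Ip * σe) / (Ip * Ω))
          ≤ Real.exp (-((y + Ip * σe) / (Ip * Ω))) * (Ip * Ω) / (y + Ip * σe) := by
        calc E1 ((y + Ip * σe) / (Ip * Ω))
            ≤ Real.exp (-((y + Ip * σe) / (Ip * Ω))) / ((y + Ip * σe) / (Ip * Ω)) := E1_le hu
          _ = Real.exp (-((y + Ip * σe) / (Ip * Ω))) * (Ip * Ω) / (y + Ip * σe) := by
              rw [div_div_eq_mul_div]
      calc Ω * Real.exp (y / (Ip * Ω)) * E1 ((y + Ip * σe) / (Ip * Ω))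
          ≤ Ω * Real.exp (y / (Ip * Ω))
            * (Real.exp (-((y + Ip * σe) / (Ip * Ω))) * (Ip * Ω) / (y + Ip * σe)) := by
            have h9 : 0 ≤ Ω * Real.exp (y / (Ip * Ω)) := by positivity
            nlinarith
        _ = Ω * (Ip * Ω) / (y + Ip * σe)
            * (Real.exp (y / (Ip * Ω)) * Real.exp (-((y + Ip * σe) / (Ip * Ω)))) := by ring
        _ = Ω * (Ip * Ω) / (y + Ip * σe) * Real.exp (-(σe / Ω)) := by rw [hexp]
        _ ≤ Ω * (Ip * Ω) / Θ * 1 := by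
            have h10 : Ω * (Ip * Ω) / (y + Ip * σe) ≤ Ω * (Ip * Ω) / Θ :=
              div_le_div_of_nonneg_left (by positivity) hΘ (by nlinarith)
            have h11 : Real.exp (-(σe / Ω)) ≤ 1 := by
              rw [Real.exp_le_one_iff]; simp; positivity
            have h12 : (0:ℝ) ≤ Ω * (Ip * Ω) / (y + Ip * σe) := by positivity
            nlinarith
        _ = Ω * (Ip * Ω) / Θ := mul_one _
    have hnn : 0 ≤ (Ω * Real.exp (-σe / Ω) * Real.log (1 + Ip * σe / y)
        + Ω * Real.exp (y / (Ip * Ω)) * E1 ((y + Ip * σe) / (Ip * Ω)))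
        * (B * Real.exp (-B * y)) := by positivity
    rw [Real.norm_of_nonneg hnn]
    have hlogb : Ω * Real.exp (-σe / Ω) * Real.log (1 + Ip * σe / y)
        ≤ Ω * (Ip * σe / Θ) := by
      have h11 : Real.exp (-σe / Ω) ≤ 1 := by
        rw [Real.exp_le_one_iff, neg_div]; simp; positivity
      have h12 : 0 < Real.exp (-σe / Ω) := Real.exp_pos _
      calc Ω * Real.exp (-σe / Ω) * Real.log (1 + Ip * σe / y)
          ≤ Ω * 1 * Real.log (1 + Ip * σe / y) :=
            mul_le_mul_of_nonneg_right (by nlinarith) hlog1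
        _ = Ω * Real.log (1 + Ip * σe / y) := by ring
        _ ≤ Ω * (Ip * σe / Θ) := mul_le_mul_of_nonneg_left hlog2 (le_of_lt hΩ)
    have hBe : Real.exp (-B * y) = Real.exp (-(B * y)) := by rw [neg_mul]
    rw [hBe]
    have hbe0 : 0 < Real.exp (-(B * y)) := Real.exp_pos _
    have := add_le_add hlogb hE1b
    calc (Ω * Real.exp (-σe / Ω) * Real.log (1 + Ip * σe / y)
        + Ω * Real.exp (y / (Ip * Ω)) * E1 ((y + Ip * σe) / (Ip * Ω)))
        * (B * Real.exp (-(B * y)))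
        ≤ (Ω * (Ip * σe / Θ) + Ω * (Ip * Ω) / Θ) * (B * Real.exp (-(B * y))) := by
          apply mul_le_mul_of_nonneg_right this (by positivity)
      _ = (Ω * (Ip * σe / Θ) + Ω * (Ip * Ω) / Θ) * B * Real.exp (-(B * y)) := by ring
  have hint : IntegrableOn (fun y : ℝ =>
      (Ω * Real.exp (-σe / Ω) * Real.log (1 + Ip * σe / y)
        + Ω * Real.exp (y / (Ip * Ω)) * E1 ((y + Ip * σe) / (Ip * Ω)))
        * (B * Real.exp (-B * y))) (Set.Ioi Θ) := by
    apply Integrable.mono' ((exp_neg_integrableOn_Ioi Θ hB).const_mul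
      ((Ω * (Ip * σe / Θ) + Ω * (Ip * Ω) / Θ) * B))
    · apply ContinuousOn.aestronglyMeasurable _ measurableSet_Ioi
      apply ContinuousOn.mul
      · apply ContinuousOn.add
        · apply ContinuousOn.mul continuousOn_const
          intro y hy
          have hy0 : 0 < y := hΘ.trans hy
          have hlx : (0:ℝ) < 1 + Ip * σe / y := by positivity
          apply ContinuousWithinAt.mono _ (subset_univ _)
          apply ContinuousAt.continuousWithinAt (s := univ)
          exact ContinuousAt.comp (g := Real.log) (f := fun y : ℝ => 1 + Ip * σe / y)
            (Real.continuousAt_log (ne_of_gt hlx))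
            ((continuousAt_const.div continuousAt_id (ne_of_gt hy0)).const_add 1)
        · apply ContinuousOn.mul
          · exact (continuous_const.mul (Real.continuous_exp.comp
              (continuous_id.div_const (Ip * Ω)))).continuousOn
          · intro y hy
            have hy0 : 0 < y := hΘ.trans hy
            have hu : 0 < (y + Ip * σe) / (Ip * Ω) := by positivity
            apply ContinuousAt.continuousWithinAt
            exact ContinuousAt.comp (g := E1) (f := fun y : ℝ => (y + Ip * σe) / (Ip * Ω))
              (E1_continuousAt hu)
              ((continuousAt_id.add continuousAt_const).div_const (Ip * Ω))
      · exact (continuous_const.mul (Real.continuous_exp.comp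
          (show Continuous fun y : ℝ => -B * y from continuous_const.mul continuous_id))).continuousOn
    · filter_upwards [ae_restrict_mem measurableSet_Ioi] with y hy
      exact hbnd y hy
  -- tendsto G at top
  have htendE1 : Tendsto E1 atTop (𝓝 0) := by
    apply squeeze_zero_norm' (a := fun z : ℝ => Real.exp (-(1 * z)))
    · filter_upwards [eventually_ge_atTop 1] with z hz
      have hz0 : 0 < z := lt_of_lt_of_le one_pos hz
      rw [Real.norm_of_nonneg (E1_nonneg hz0)]
      calc E1 z ≤ Real.exp (-z) / z := E1_le hz0
        _ ≤ Real.exp (-z) / 1 := by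
            apply div_le_div_of_nonneg_left (le_of_lt (Real.exp_pos _)) one_pos hz
        _ = Real.exp (-(1 * z)) := by rw [div_one, one_mul]
    · exact tendsto_exp_neg_mul 1 one_pos
  have htendG : Tendsto G atTop (𝓝 0) := by
    rw [hG]
    have t1 : Tendsto (fun y : ℝ => Ω * Real.exp (-(σe / Ω)) * E1 (B * y)) atTop (𝓝 0) := by
      have := (htendE1.comp (tendsto_id.const_mul_atTop hB)).const_mul
        (Ω * Real.exp (-(σe / Ω)))
      simpa [Function.comp] using this
    have t2 : Tendsto (fun y : ℝ => Ω / (1 - Ip * Ω * B) *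
        (-Real.exp (Ip * σe * B - σe / Ω) * E1 (B * (y + Ip * σe))
          + Real.exp (y / (Ip * Ω) - B * y) * E1 ((y + Ip * σe) / (Ip * Ω)))) atTop (𝓝 0) := by
      have t2a : Tendsto (fun y : ℝ => -Real.exp (Ip * σe * B - σe / Ω)
          * E1 (B * (y + Ip * σe))) atTop (𝓝 0) := by
        have hcomp : Tendsto (fun y : ℝ => B * (y + Ip * σe)) atTop atTop :=
          (tendsto_atTop_add_const_right atTop (Ip * σe) tendsto_id).const_mul_atTop hB
        have := (htendE1.comp hcomp).const_mul (-Real.exp (Ip * σe * B - σe / Ω))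
        simpa [Function.comp] using this
      have t2b : Tendsto (fun y : ℝ => Real.exp (y / (Ip * Ω) - B * y)
          * E1 ((y + Ip * σe) / (Ip * Ω))) atTop (𝓝 0) := by
        apply squeeze_zero_norm' (a := fun y : ℝ => Ip * Ω / Θ * Real.exp (-(B * y)))
        · filter_upwards [eventually_ge_atTop (max Θ 1)] with y hy
          have hy0 : 0 < y := lt_of_lt_of_le hΘ ((le_max_left _ _).trans hy)
          have hys : (0:ℝ) < y + Ip * σe := by positivity
          have hu : 0 < (y + Ip * σe) / (Ip * Ω) := by positivity
          have hE1n := E1_nonneg hu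
          have hnn : 0 ≤ Real.exp (y / (Ip * Ω) - B * y) * E1 ((y + Ip * σe) / (Ip * Ω)) := by
            positivity
          rw [Real.norm_of_nonneg hnn]
          have h8 : E1 ((y + Ip * σe) / (Ip * Ω))
              ≤ Real.exp (-((y + Ip * σe) / (Ip * Ω))) * (Ip * Ω) / (y + Ip * σe) := by
            calc E1 ((y + Ip * σe) / (Ip * Ω))
                ≤ Real.exp (-((y + Ip * σe) / (Ip * Ω))) / ((y + Ip * σe) / (Ip * Ω)) :=
                  E1_le hu
              _ = Real.exp (-((y + Ip * σe) / (Ip * Ω))) * (Ip * Ω) / (y + Ip * σe) := by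
                  rw [div_div_eq_mul_div]
          have hexp : Real.exp (y / (Ip * Ω) - B * y)
              * Real.exp (-((y + Ip * σe) / (Ip * Ω)))
              = Real.exp (-(σe / Ω)) * Real.exp (-(B * y)) := by
            rw [← Real.exp_add, ← Real.exp_add]; congr 1; field_simp; ring
          calc Real.exp (y / (Ip * Ω) - B * y) * E1 ((y + Ip * σe) / (Ip * Ω))
              ≤ Real.exp (y / (Ip * Ω) - B * y)
                * (Real.exp (-((y + Ip * σe) / (Ip * Ω))) * (Ip * Ω) / (y + Ip * σe)) := by
                have h9 : 0 < Real.exp (y / (Ip * Ω) - B * y) := Real.exp_pos _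
                nlinarith
            _ = Real.exp (y / (Ip * Ω) - B * y) * Real.exp (-((y + Ip * σe) / (Ip * Ω)))
                * ((Ip * Ω) / (y + Ip * σe)) := by ring
            _ = Real.exp (-(σe / Ω)) * Real.exp (-(B * y)) * ((Ip * Ω) / (y + Ip * σe)) := by
                rw [hexp]
            _ = (Real.exp (-(σe / Ω)) * ((Ip * Ω) / (y + Ip * σe)))
                * Real.exp (-(B * y)) := by ring
            _ ≤ (1 * ((Ip * Ω) / Θ)) * Real.exp (-(B * y)) := by
                have h10 : (Ip * Ω) / (y + Ip * σe) ≤ (Ip * Ω) / Θ := by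
                  apply div_le_div_of_nonneg_left (by positivity) hΘ
                  have := (le_max_left Θ 1).trans hy
                  nlinarith
                have h11 : Real.exp (-(σe / Ω)) ≤ 1 := by
                  rw [Real.exp_le_one_iff]; simp; positivity
                have h12 : (0:ℝ) ≤ (Ip * Ω) / (y + Ip * σe) := by positivity
                have h13 : 0 < Real.exp (-(B * y)) := Real.exp_pos _
                exact mul_le_mul_of_nonneg_right
                  (mul_le_mul h11 h10 h12 zero_le_one) (le_of_lt h13)
            _ = Ip * Ω / Θ * Real.exp (-(B * y)) := by ring
        · simpa using (tendsto_exp_neg_mul B hB).const_mul (Ip * Ω / Θ)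
      have := (t2a.add t2b).const_mul (Ω / (1 - Ip * Ω * B))
      simpa using this
    have t3 : Tendsto (fun y : ℝ => Ω * (Real.exp (-(B * y) - σe / Ω)
        * (Real.log (1 + Ip * σe / y)
          + Real.exp ((y + Ip * σe) / (Ip * Ω)) * E1 ((y + Ip * σe) / (Ip * Ω)))))
        atTop (𝓝 0) := by
      apply squeeze_zero_norm'
        (a := fun y : ℝ => Ω * (Ip * σe / Θ + Ip * Ω / Θ) * Real.exp (-(B * y)))
      · filter_upwards [eventually_ge_atTop (max Θ 1)] with y hy
        have hy0 : 0 < y := lt_of_lt_of_le hΘ ((le_max_left _ _).trans hy)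
        have hys : (0:ℝ) < y + Ip * σe := by positivity
        have hu : 0 < (y + Ip * σe) / (Ip * Ω) := by positivity
        have hE1n := E1_nonneg hu
        have hlx : (0:ℝ) < 1 + Ip * σe / y := by positivity
        have hlog1 : 0 ≤ Real.log (1 + Ip * σe / y) :=
          Real.log_nonneg (le_add_of_nonneg_right (by positivity))
        have hlog2 : Real.log (1 + Ip * σe / y) ≤ Ip * σe / Θ := by
          have h1 := Real.log_le_sub_one_of_pos hlx
          have h2 : Ip * σe / y ≤ Ip * σe / Θ :=
            div_le_div_of_nonneg_left (by positivity) hΘ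
              (by exact (le_max_left Θ 1).trans hy)
          linarith
        have hE1b : Real.exp ((y + Ip * σe) / (Ip * Ω)) * E1 ((y + Ip * σe) / (Ip * Ω))
            ≤ Ip * Ω / Θ := by
          have h8 : E1 ((y + Ip * σe) / (Ip * Ω))
              ≤ Real.exp (-((y + Ip * σe) / (Ip * Ω))) * (Ip * Ω) / (y + Ip * σe) := by
            calc E1 ((y + Ip * σe) / (Ip * Ω))
                ≤ Real.exp (-((y + Ip * σe) / (Ip * Ω))) / ((y + Ip * σe) / (Ip * Ω)) :=
                  E1_le hu
              _ = Real.exp (-((y + Ip * σe) / (Ip * Ω))) * (Ip * Ω) / (y + Ip * σe) := by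
                  rw [div_div_eq_mul_div]
          have hexp : Real.exp ((y + Ip * σe) / (Ip * Ω))
              * Real.exp (-((y + Ip * σe) / (Ip * Ω))) = 1 := by
            rw [← Real.exp_add]; simp
          calc Real.exp ((y + Ip * σe) / (Ip * Ω)) * E1 ((y + Ip * σe) / (Ip * Ω))
              ≤ Real.exp ((y + Ip * σe) / (Ip * Ω))
                * (Real.exp (-((y + Ip * σe) / (Ip * Ω))) * (Ip * Ω) / (y + Ip * σe)) := by
                have h9 : 0 < Real.exp ((y + Ip * σe) / (Ip * Ω)) := Real.exp_pos _
                nlinarith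
            _ = Real.exp ((y + Ip * σe) / (Ip * Ω)) * Real.exp (-((y + Ip * σe) / (Ip * Ω)))
                * ((Ip * Ω) / (y + Ip * σe)) := by ring
            _ = (Ip * Ω) / (y + Ip * σe) := by rw [hexp, one_mul]
            _ ≤ Ip * Ω / Θ := by
                apply div_le_div_of_nonneg_left (by positivity) hΘ
                have := (le_max_left Θ 1).trans hy
                nlinarith
        have hnn : 0 ≤ Ω * (Real.exp (-(B * y) - σe / Ω)
            * (Real.log (1 + Ip * σe / y)
              + Real.exp ((y + Ip * σe) / (Ip * Ω)) * E1 ((y + Ip * σe) / (Ip * Ω)))) := by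
          positivity
        rw [Real.norm_of_nonneg hnn]
        have hexp2 : Real.exp (-(B * y) - σe / Ω) ≤ Real.exp (-(B * y)) := by
          apply Real.exp_le_exp.2
          have : (0:ℝ) ≤ σe / Ω := by positivity
          linarith
        have hexp3 : 0 < Real.exp (-(B * y) - σe / Ω) := Real.exp_pos _
        have hsum2 : Real.log (1 + Ip * σe / y)
            + Real.exp ((y + Ip * σe) / (Ip * Ω)) * E1 ((y + Ip * σe) / (Ip * Ω))
            ≤ Ip * σe / Θ + Ip * Ω / Θ := add_le_add hlog2 hE1b
        have hsum2n : 0 ≤ Real.log (1 + Ip * σe / y)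
            + Real.exp ((y + Ip * σe) / (Ip * Ω)) * E1 ((y + Ip * σe) / (Ip * Ω)) := by
          positivity
        have h13 : 0 < Real.exp (-(B * y)) := Real.exp_pos _
        have h15 := mul_le_mul hexp2 hsum2 hsum2n (le_of_lt h13)
        calc Ω * (Real.exp (-(B * y) - σe / Ω)
            * (Real.log (1 + Ip * σe / y)
              + Real.exp ((y + Ip * σe) / (Ip * Ω)) * E1 ((y + Ip * σe) / (Ip * Ω))))
            ≤ Ω * (Real.exp (-(B * y)) * (Ip * σe / Θ + Ip * Ω / Θ)) :=
              mul_le_mul_of_nonneg_left h15 (le_of_lt hΩ)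
          _ = Ω * (Ip * σe / Θ + Ip * Ω / Θ) * Real.exp (-(B * y)) := by ring
      · simpa using (tendsto_exp_neg_mul B hB).const_mul (Ω * (Ip * σe / Θ + Ip * Ω / Θ))
    have := (t1.add t2).sub t3
    simpa using this
  have hcont : ContinuousWithinAt G (Ici Θ) Θ :=
    (hderivall Θ hΘ).continuousAt.continuousWithinAt
  have hftc := integral_Ioi_of_hasDerivAt_of_tendsto hcont
    (fun y hy => hderivall y (hΘ.trans hy)) hint htendG
  rw [hftc, hG]
  simp only [J2]
  have e6 : (Θ + Ip * σe) / (Ip * Ω) = Θ / (Ip * Ω) + σe / Ω := by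
    field_simp
  have e10 : Real.exp (-(σe / Ω)) = Real.exp (-σe / Ω) := by rw [neg_div]
  have e12 : Real.exp (-(B * Θ) - σe / Ω) = Real.exp (-B * Θ - σe / Ω) := by rw [neg_mul]
  rw [e10, e12]
  field_simp
  ring
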